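/- Let g be a real metric Lie algebra with no non-zero abelian orthogonal factor admitting an orthogonal bi-invariant complex structure J, and suppose the complex metric Lie algebra (g,J) has an orthogonal decomposition into irreducible complex factors (g,J) = ⊕ⱼ₌₁^k (gⱼ, Jⱼ), where Jⱼ is the restriction of J to gⱼ. Then every orthogonal bi-invariant complex structure on g is of the form ±J₁ ⊕ ±J₂ ⊕ … ⊕ ±J_k; in particular g admits exactly 2^k orthogonal bi-invariant complex structures. -/

import Mathlib

open scoped RealInnerProductSpace TensorProduct

/-- A metric Lie algebra: a real Lie algebra equipped with a positive definite inner product. -/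
class MetricLieAlgebra (g : Type*) [LieRing g] [LieAlgebra ℝ g] [Inner ℝ g] : Prop where
  inner_add_left : ∀ x y z : g, ⟪x + y, z⟫ = ⟪x, z⟫ + ⟪y, z⟫
  inner_smul_left : ∀ (r : ℝ) (x y : g), ⟪r • x, y⟫ = r * ⟪x, y⟫
  inner_symm : ∀ x y : g, ⟪x, y⟫ = ⟪y, x⟫
  inner_self_pos : ∀ x : g, x ≠ 0 → 0 < ⟪x, x⟫

variable {g : Type*} [LieRing g] [LieAlgebra ℝ g] [Inner ℝ g]

/-- An orthogonal factor: an ideal admitting a complementary ideal orthogonal to it. -/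
def IsOrthogonalFactor (h : LieIdeal ℝ g) : Prop :=
  ∃ h' : LieIdeal ℝ g, (∀ x ∈ h, ∀ y ∈ h', ⟪x, y⟫ = 0) ∧ h ⊔ h' = ⊤ ∧ h ⊓ h' = ⊥

/-- An orthogonal projection of a metric Lie algebra. -/
def IsOrthogonalProjection (p : g →ₗ[ℝ] g) : Prop :=
  (∀ x y : g, p ⁅x, y⁆ = ⁅p x, p y⁆) ∧ p ∘ₗ p = p ∧
  (∀ x y : g, p ⁅x, y⁆ = ⁅p x, y⁆) ∧ ∀ x y : g, ⟪p x, y⟫ = ⟪x, p y⟫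

/-- An orthogonal bi-invariant complex structure. -/
def IsOrthBiinvCplxStruct (J : g →ₗ[ℝ] g) : Prop :=
  (∀ x : g, J (J x) = -x) ∧ (∀ x y : g, J ⁅x, y⁆ = ⁅J x, y⁆) ∧
    ∀ x y : g, ⟪J x, J y⟫ = ⟪x, y⟫

/-- A complex factor of `(g,J)`: an orthogonal factor which is `J`-invariant. -/
def IsComplexFactor (J : g →ₗ[ℝ] g) (h : LieIdeal ℝ g) : Prop :=
  IsOrthogonalFactor h ∧ ∀ x ∈ h, J x ∈ h

/-- An irreducible complex factor of `(g,J)`. -/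
def IsComplexIrreducibleFactor (J : g →ₗ[ℝ] g) (h : LieIdeal ℝ g) : Prop :=
  IsComplexFactor J h ∧ h ≠ ⊥ ∧
    ∀ k : LieIdeal ℝ g, k ≤ h → IsComplexFactor J k → k = ⊥ ∨ k = h

/-- If `(g,J)` decomposes orthogonally into `k` irreducible complex factors
`(gⱼ,Jⱼ)`, then every orthogonal bi-invariant complex structure on `g` is of the form
`±J₁ ⊕ ⋯ ⊕ ±J_k`, and `g` has exactly `2^k` orthogonal bi-invariant complex
structures. -/
theorem stmt13 (g : Type*) [LieRing g] [LieAlgebra ℝ g] [Inner ℝ g]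
    [MetricLieAlgebra g] [Module.Finite ℝ g]
    (hZ : ∀ x : g, (∀ y : g, ⁅x, y⁆ = 0) →
      x ∈ ⁅(⊤ : LieIdeal ℝ g), (⊤ : LieIdeal ℝ g)⁆)
    (J : g →ₗ[ℝ] g) (hJ : IsOrthBiinvCplxStruct J)
    (k : ℕ) (G : Fin k → LieIdeal ℝ g)
    (hirr : ∀ j, IsComplexIrreducibleFactor J (G j))
    (horth : ∀ i j, i ≠ j → ∀ x ∈ G i, ∀ y ∈ G j, ⟪x, y⟫ = 0)
    (hsup : (⨆ j, G j) = ⊤) :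
    (∀ J' : g →ₗ[ℝ] g, IsOrthBiinvCplxStruct J' →
      ∃ ε : Fin k → ℝ, (∀ j, ε j = 1 ∨ ε j = -1) ∧
        ∀ j, ∀ x ∈ G j, J' x = ε j • J x) ∧
    Set.ncard {J' : g →ₗ[ℝ] g | IsOrthBiinvCplxStruct J'} = 2 ^ k := by
  classical
  obtain ⟨hJsq, hJbr, hJorth⟩ := hJ
  have symm : ∀ x y : g, ⟪x, y⟫ = ⟪y, x⟫ := MetricLieAlgebra.inner_symm
  have addl : ∀ x y z : g, ⟪x + y, z⟫ = ⟪x, z⟫ + ⟪y, z⟫ := MetricLieAlgebra.inner_add_left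
  have smull : ∀ (r : ℝ) (x y : g), ⟪r • x, y⟫ = r * ⟪x, y⟫ := MetricLieAlgebra.inner_smul_left
  have posdef : ∀ x : g, ⟪x, x⟫ = 0 → x = 0 := by
    intro x hx
    by_contra h
    exact absurd hx (ne_of_gt (MetricLieAlgebra.inner_self_pos x h))
  let B : g →ₗ[ℝ] g →ₗ[ℝ] ℝ := LinearMap.mk₂ ℝ (fun x y => ⟪x, y⟫)
    (fun x y z => addl x y z)
    (fun r x y => by show ⟪r • x, y⟫ = r • ⟪x, y⟫; rw [smull, smul_eq_mul])
    (fun x y z => by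
      show ⟪x, y + z⟫ = ⟪x, y⟫ + ⟪x, z⟫
      rw [symm x (y + z), addl, symm y x, symm z x])
    (fun r x y => by
      show ⟪x, r • y⟫ = r • ⟪x, y⟫
      rw [symm x (r • y), smull, symm y x, smul_eq_mul])
  have hB : ∀ x y : g, B x y = ⟪x, y⟫ := fun _ _ => rfl
  have posdefB : ∀ x : g, B x x = 0 → x = 0 := posdef
  have horthB : ∀ i j, i ≠ j → ∀ x ∈ G i, ∀ y ∈ G j, B x y = 0 := horth
  have hJorthB : ∀ x y : g, B (J x) (J y) = B x y := hJorth
  have hBsymm : ∀ x y : g, B x y = B y x := symm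
  -- skewness of J
  have hJskew : ∀ x y : g, B (J x) y = -(B x (J y)) := by
    intro x y
    have h1 : B (J x) (J (J y)) = B x (J y) := hJorthB x (J y)
    rw [hJsq y, map_neg] at h1
    linarith [h1]
  -- right bracket rule
  have hJbr_r : ∀ x y : g, J ⁅x, y⁆ = ⁅x, J y⁆ := by
    intro x y
    have : J ⁅x, y⁆ = J (-⁅y, x⁆) := by rw [lie_skew]
    rw [this, map_neg, hJbr, ← lie_skew]
    exact neg_neg _
  -- cross brackets vanish
  have hzero_br : ∀ i j, i ≠ j → ∀ x ∈ G i, ∀ y ∈ G j, ⁅x, y⁆ = (0 : g) := by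
    intro i j hij x hx y hy
    have h1 : ⁅x, y⁆ ∈ G j := (G j).lie_mem hy
    have h2 : ⁅x, y⁆ ∈ G i := by
      rw [← lie_skew]
      exact neg_mem ((G i).lie_mem hx)
    exact posdef _ (horth i j hij _ h2 _ h1)
  -- decomposition
  have hexist : ∀ x : g, ∃ c : Fin k → g, (∀ j, c j ∈ G j) ∧ ∑ j, c j = x := by
    intro x
    have hx : x ∈ ⨆ j, G j := by rw [hsup]; exact LieSubmodule.mem_top x
    refine LieSubmodule.iSup_induction
      (motive := fun x => ∃ c : Fin k → g, (∀ j, c j ∈ G j) ∧ ∑ j, c j = x) G hx ?_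
      ⟨0, fun j => zero_mem _, by simp⟩ ?_
    · intro i y hy
      refine ⟨fun i' => if i' = i then y else 0, ?_, by simp⟩
      intro j
      by_cases h : j = i
      · subst h; simpa using hy
      · simp only [if_neg h]; exact zero_mem _
    · rintro y z ⟨c1, hc1, hs1⟩ ⟨c2, hc2, hs2⟩
      exact ⟨c1 + c2, fun j => add_mem (hc1 j) (hc2 j), by
        simp only [Pi.add_apply, Finset.sum_add_distrib, hs1, hs2]⟩
  have huniq0 : ∀ d : Fin k → g, (∀ j, d j ∈ G j) → ∑ j, d j = 0 → ∀ j, d j = 0 := by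
    intro d hd hs i
    have h1 : B (d i) (∑ j, d j) = B (d i) (d i) := by
      rw [map_sum]
      refine Finset.sum_eq_single i (fun j _ hji => horthB i j (Ne.symm hji) _ (hd i) _ (hd j))
        (fun h => absurd (Finset.mem_univ i) h)
    rw [hs, map_zero] at h1
    exact posdefB _ h1.symm
  choose c hcmem hcsum using hexist
  have hcuniq : ∀ (x : g) (d : Fin k → g), (∀ j, d j ∈ G j) → ∑ j, d j = x → d = c x := by
    intro x d hd hs
    funext i
    have h0 := huniq0 (fun j => d j - c x j) (fun j => sub_mem (hd j) (hcmem x j))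
      (by rw [Finset.sum_sub_distrib, hs, hcsum, sub_self]) i
    exact sub_eq_zero.mp h0
  have hcadd : ∀ x y : g, c (x + y) = c x + c y := by
    intro x y
    exact (hcuniq (x + y) (c x + c y) (fun j => add_mem (hcmem x j) (hcmem y j))
      (by simp only [Pi.add_apply, Finset.sum_add_distrib, hcsum])).symm
  have hcsmul : ∀ (r : ℝ) (x : g), c (r • x) = r • c x := by
    intro r x
    exact (hcuniq (r • x) (r • c x) (fun j => SMulMemClass.smul_mem r (hcmem x j))
      (by simp only [Pi.smul_apply, ← Finset.smul_sum, hcsum])).symm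
  let p : Fin k → g →ₗ[ℝ] g := fun j =>
    { toFun := fun x => c x j
      map_add' := fun x y => by show c (x + y) j = c x j + c y j; rw [hcadd]; rfl
      map_smul' := fun r x => by show c (r • x) j = r • c x j; rw [hcsmul]; rfl }
  have hpapp : ∀ j x, p j x = c x j := fun _ _ => rfl
  have hpmem : ∀ j x, p j x ∈ G j := fun j x => hcmem x j
  have hpsum : ∀ x, ∑ j, p j x = x := hcsum
  have hsingle : ∀ i (x : g), x ∈ G i → c x = fun i' => if i' = i then x else 0 := by
    intro i x hx
    refine (hcuniq x _ ?_ (by simp)).symm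
    intro j
    by_cases h : j = i
    · subst h; simpa using hx
    · simp only [if_neg h]; exact zero_mem _
  have hpid : ∀ j (x : g), x ∈ G j → p j x = x := by
    intro j x hx
    rw [hpapp, hsingle j x hx]
    simp
  have hpzero : ∀ i j, i ≠ j → ∀ x ∈ G i, p j x = 0 := by
    intro i j hij x hx
    rw [hpapp, hsingle i x hx]
    exact if_neg (Ne.symm hij)
  -- sums and brackets
  have lie_sum' : ∀ (u : g) (f : Fin k → g), ⁅u, ∑ i, f i⁆ = ∑ i, ⁅u, f i⁆ := by
    intro u f
    have := map_sum (LieAlgebra.ad ℝ g u) f Finset.univ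
    simpa only [LieAlgebra.ad_apply] using this
  have sum_lie' : ∀ (f : Fin k → g) (u : g), ⁅∑ i, f i, u⁆ = ∑ i, ⁅f i, u⁆ := by
    intro f u
    calc ⁅∑ i, f i, u⁆ = -⁅u, ∑ i, f i⁆ := (lie_skew _ _).symm
      _ = -∑ i, ⁅u, f i⁆ := by rw [lie_sum']
      _ = ∑ i, -⁅u, f i⁆ := by rw [Finset.sum_neg_distrib]
      _ = ∑ i, ⁅f i, u⁆ := Finset.sum_congr rfl fun i _ => lie_skew _ _
  -- bracket decomposes componentwise
  have hbr_collapse : ∀ (j : Fin k) (u : g), u ∈ G j → ∀ y : g, ⁅u, y⁆ = ⁅u, c y j⁆ := by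
    intro j u hu y
    conv_lhs => rw [← hcsum y]
    rw [lie_sum']
    refine Finset.sum_eq_single j (fun i _ hij => hzero_br j i (Ne.symm hij) u hu _ (hcmem y i))
      (fun h => absurd (Finset.mem_univ j) h)
  have hcbr : ∀ x y : g, c ⁅x, y⁆ = fun j => ⁅c x j, c y j⁆ := by
    intro x y
    refine (hcuniq ⁅x, y⁆ _ (fun j => (G j).lie_mem (hcmem y j)) ?_).symm
    calc ∑ j, ⁅c x j, c y j⁆ = ∑ j, ⁅c x j, y⁆ := by
          exact Finset.sum_congr rfl fun j _ => (hbr_collapse j _ (hcmem x j) y).symm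
      _ = ⁅x, y⁆ := by rw [← sum_lie', hcsum]
  have hpbr_l : ∀ (j : Fin k) (x y : g), p j ⁅x, y⁆ = ⁅p j x, y⁆ := by
    intro j x y
    rw [hpapp, hcbr, hpapp, hbr_collapse j _ (hcmem x j) y]
  have hpbr_r : ∀ (j : Fin k) (x y : g), p j ⁅x, y⁆ = ⁅x, p j y⁆ := by
    intro j x y
    have h1 : p j ⁅x, y⁆ = p j (-⁅y, x⁆) := by rw [lie_skew]
    rw [h1, map_neg, hpbr_l, ← lie_skew, neg_neg]
  have hpsym : ∀ (j : Fin k) (x y : g), B (p j x) y = B x (p j y) := by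
    intro j x y
    have h1 : ∀ z w : g, w ∈ G j → B w z = B w (p j z) := by
      intro z w hw
      conv_lhs => rw [← hcsum z]
      rw [map_sum, hpapp]
      refine Finset.sum_eq_single j (fun i _ hij => horthB j i (Ne.symm hij) _ hw _ (hcmem z i))
        (fun h => absurd (Finset.mem_univ j) h)
    calc B (p j x) y = B (p j x) (p j y) := h1 y _ (hpmem j x)
      _ = B (p j y) (p j x) := hBsymm _ _
      _ = B (p j y) x := (h1 x _ (hpmem j y)).symm
      _ = B x (p j y) := hBsymm _ _
  have hpJ : ∀ (j : Fin k) (x : g), p j (J x) = J (p j x) := by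
    intro j x
    have h1 : (fun i => J (c x i)) = c (J x) := by
      refine hcuniq (J x) _ (fun i => (hirr i).1.2 _ (hcmem x i)) ?_
      rw [← map_sum, hcsum]
    rw [hpapp, ← h1, hpapp]
  -- killing lemmas
  have hkill : ∀ T : g →ₗ[ℝ] g, (∀ x y : g, T ⁅x, y⁆ = 0) →
      ∀ z, z ∈ ⁅(⊤ : LieIdeal ℝ g), (⊤ : LieIdeal ℝ g)⁆ → T z = 0 := by
    intro T hT z hz
    have hz' : z ∈ Submodule.span ℝ
        {m : g | ∃ x ∈ (⊤ : LieIdeal ℝ g), ∃ n ∈ (⊤ : LieIdeal ℝ g), ⁅x, n⁆ = m} := by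
      rw [← LieSubmodule.lieIdeal_oper_eq_linear_span']
      exact hz
    refine Submodule.span_induction ?_ (map_zero T) ?_ ?_ hz'
    · rintro m ⟨x, -, y, -, rfl⟩; exact hT x y
    · intro a b _ _ ha hb; rw [map_add, ha, hb, add_zero]
    · intro r a _ ha; rw [map_smul, ha, smul_zero]
  have hnil : ∀ T : g →ₗ[ℝ] g, (∀ x y : g, B (T x) y = -(B x (T y))) →
      (∀ x y : g, T ⁅x, y⁆ = 0) → (∀ x y : g, T ⁅x, y⁆ = ⁅T x, y⁆) → ∀ x, T x = 0 := by
    intro T hskew hTk hTbi x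
    have hcen : ∀ u : g, ⁅T x, u⁆ = 0 := fun u => by rw [← hTbi, hTk]
    have hmem : T x ∈ ⁅(⊤ : LieIdeal ℝ g), (⊤ : LieIdeal ℝ g)⁆ := hZ _ hcen
    have hTT : T (T x) = 0 := hkill T hTk _ hmem
    have h0 : B (T x) (T x) = 0 := by rw [hskew, hTT, map_zero, neg_zero]
    exact posdefB _ h0
  -- main dichotomy
  have main : ∀ J' : g →ₗ[ℝ] g, IsOrthBiinvCplxStruct J' →
      ∀ j, (∀ x ∈ G j, J' x = J x) ∨ (∀ x ∈ G j, J' x = -(J x)) := by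
    intro J' hJ'
    obtain ⟨hJ'sq, hJ'br, hJ'orth⟩ := hJ'
    have hJ'orthB : ∀ x y : g, B (J' x) (J' y) = B x y := hJ'orth
    have hJ'skew : ∀ x y : g, B (J' x) y = -(B x (J' y)) := by
      intro x y
      have h1 : B (J' x) (J' (J' y)) = B x (J' y) := hJ'orthB x (J' y)
      rw [hJ'sq y, map_neg] at h1
      linarith [h1]
    have hJ'br_r : ∀ x y : g, J' ⁅x, y⁆ = ⁅x, J' y⁆ := by
      intro x y
      have h1 : J' ⁅x, y⁆ = J' (-⁅y, x⁆) := by rw [lie_skew]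
      rw [h1, map_neg, hJ'br, ← lie_skew]
      exact neg_neg _
    -- J and J' commute
    have hCbr0 : ∀ x y : g, J (J' ⁅x, y⁆) = J' (J ⁅x, y⁆) := by
      intro x y
      rw [hJ'br_r x y, hJbr x (J' y), hJbr x y, hJ'br_r (J x) y]
    have hcomm : ∀ x : g, J (J' x) = J' (J x) := by
      intro x
      set C : g →ₗ[ℝ] g := J ∘ₗ J' - J' ∘ₗ J with hCdef
      have hCapp : ∀ x : g, C x = J (J' x) - J' (J x) := fun x => rfl
      have hCk : ∀ x y : g, C ⁅x, y⁆ = 0 := by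
        intro x y; rw [hCapp, hCbr0, sub_self]
      have hCbi : ∀ x y : g, C ⁅x, y⁆ = ⁅C x, y⁆ := by
        intro x y
        rw [hCapp, hCapp, hJ'br x y, hJbr (J' x) y, hJbr x y, hJ'br (J x) y, sub_lie]
      have hCskew : ∀ x y : g, B (C x) y = -(B x (C y)) := by
        intro x y
        have e1 : B (J (J' x)) y = B x (J' (J y)) := by
          rw [hJskew (J' x) y, hJ'skew x (J y), neg_neg]
        have e2 : B (J' (J x)) y = B x (J (J' y)) := by
          rw [hJ'skew (J x) y, hJskew x (J' y), neg_neg]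
        rw [hCapp x, hCapp y, map_sub, LinearMap.sub_apply, map_sub, e1, e2]
        ring
      have := hnil C hCskew hCk hCbi x
      rw [hCapp] at this
      exact sub_eq_zero.mp this
    -- the involution A = -J ∘ J'
    set A : g →ₗ[ℝ] g := -(J ∘ₗ J') with hAdef
    have hAapp : ∀ x : g, A x = -(J (J' x)) := fun x => rfl
    have hA2 : ∀ x : g, A (A x) = x := by
      intro x
      have h1 : A (A x) = J (J' (J (J' x))) := by
        rw [hAapp, hAapp, map_neg, map_neg, neg_neg]
      rw [h1, ← hcomm (J' x), hJ'sq x, map_neg, map_neg, hJsq x, neg_neg]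
    have hAbr_l : ∀ x y : g, A ⁅x, y⁆ = ⁅A x, y⁆ := by
      intro x y
      rw [hAapp, hAapp, hJ'br x y, hJbr (J' x) y, neg_lie]
    have hAbr_r : ∀ x y : g, A ⁅x, y⁆ = ⁅x, A y⁆ := by
      intro x y
      rw [hAapp, hAapp, hJ'br_r x y, hJbr_r x (J' y), lie_neg]
    have hAsa : ∀ x y : g, B (A x) y = B x (A y) := by
      intro x y
      rw [hAapp, hAapp, map_neg, LinearMap.neg_apply, map_neg,
        hJskew (J' x) y, hJ'skew x (J y), neg_neg, hcomm y]
    have hAJ : ∀ x : g, A (J x) = J (A x) := by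
      intro x
      rw [hAapp, hAapp, map_neg, hcomm x]
    -- A commutes with the projections
    have hApj : ∀ (j : Fin k) (x : g), A (p j x) = p j (A x) := by
      intro j x
      set D : g →ₗ[ℝ] g := A ∘ₗ p j - p j ∘ₗ A with hDdef
      have hDapp : ∀ x : g, D x = A (p j x) - p j (A x) := fun x => rfl
      have hDk : ∀ x y : g, D ⁅x, y⁆ = 0 := by
        intro x y
        rw [hDapp, hpbr_l j x y, hAbr_r (p j x) y, ← hpbr_l j x (A y), ← hAbr_r x y, sub_self]
      have hDbi : ∀ x y : g, D ⁅x, y⁆ = ⁅D x, y⁆ := by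
        intro x y
        rw [hDapp, hDapp, hpbr_l j x y, hAbr_l (p j x) y, hAbr_l x y, hpbr_l j (A x) y, sub_lie]
      have hDskew : ∀ x y : g, B (D x) y = -(B x (D y)) := by
        intro x y
        have e1 : B (A (p j x)) y = B x (p j (A y)) := by
          rw [hAsa (p j x) y, hpsym j x (A y)]
        have e2 : B (p j (A x)) y = B x (A (p j y)) := by
          rw [hpsym j (A x) y, hAsa x (p j y)]
        rw [hDapp x, hDapp y, map_sub, LinearMap.sub_apply, map_sub, e1, e2]
        ring
      have := hnil D hDskew hDk hDbi x
      rw [hDapp] at this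
      exact sub_eq_zero.mp this
    have hAmem : ∀ (j : Fin k), ∀ x ∈ G j, A x ∈ G j := by
      intro j x hx
      have h1 : A x = p j (A x) := by rw [← hApj, hpid j x hx]
      rw [h1]
      exact hpmem j (A x)
    -- the eigen-ideals
    intro j
    let Psub : Submodule ℝ g := (G j : Submodule ℝ g) ⊓ LinearMap.ker (A - LinearMap.id)
    have hPsubmem : ∀ x : g, x ∈ Psub ↔ x ∈ G j ∧ A x = x := by
      intro x
      rw [Submodule.mem_inf, LinearMap.mem_ker, LinearMap.sub_apply, LinearMap.id_apply,
        sub_eq_zero]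
      rfl
    let P : LieIdeal ℝ g :=
      { Psub with
        lie_mem := by
          intro z x hx
          have hx' : x ∈ G j ∧ A x = x := (hPsubmem x).mp hx
          refine (hPsubmem ⁅z, x⁆).mpr ⟨(G j).lie_mem hx'.1, ?_⟩
          rw [hAbr_r z x, hx'.2] }
    have hPmem : ∀ x : g, x ∈ P ↔ x ∈ G j ∧ A x = x := hPsubmem
    let Qsub : Submodule ℝ g := LinearMap.ker (A ∘ₗ p j + p j)
    have hQsubmem : ∀ x : g, x ∈ Qsub ↔ A (p j x) = -(p j x) := by
      intro x
      rw [LinearMap.mem_ker, LinearMap.add_apply, LinearMap.comp_apply, add_eq_zero_iff_eq_neg]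
    let Q : LieIdeal ℝ g :=
      { Qsub with
        lie_mem := by
          intro z x hx
          have hx' := (hQsubmem x).mp hx
          refine (hQsubmem ⁅z, x⁆).mpr ?_
          rw [hpbr_r j z x, hAbr_r z (p j x), hx', lie_neg] }
    have hQmem : ∀ x : g, x ∈ Q ↔ A (p j x) = -(p j x) := hQsubmem
    have horthPQ : ∀ x ∈ P, ∀ y ∈ Q, B x y = 0 := by
      intro x hx y hy
      obtain ⟨hxG, hxA⟩ := (hPmem x).mp hx
      have hyA := (hQmem y).mp hy
      have h1 : B x y = B x (p j y) :=
        calc B x y = B (p j x) y := by rw [hpid j x hxG]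
          _ = B x (p j y) := hpsym j x y
      have h2 : B x (p j y) = -(B x (p j y)) :=
        calc B x (p j y) = B (A x) (p j y) := by rw [hxA]
          _ = B x (A (p j y)) := hAsa x (p j y)
          _ = B x (-(p j y)) := by rw [hyA]
          _ = -(B x (p j y)) := by rw [map_neg]
      have h3 : B x (p j y) = 0 := by linarith
      rw [h1, h3]
    have hsupPQ : P ⊔ Q = ⊤ := by
      rw [eq_top_iff]
      intro x _
      rw [LieSubmodule.mem_sup]
      set u : g := (2⁻¹ : ℝ) • (p j x + A (p j x)) with hu_def
      have huG : u ∈ G j :=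
        SMulMemClass.smul_mem _ (add_mem (hpmem j x) (hAmem j _ (hpmem j x)))
      have hAu : A u = u := by rw [hu_def, map_smul, map_add, hA2, add_comm]
      refine ⟨u, (hPmem u).mpr ⟨huG, hAu⟩, x - u, (hQmem _).mpr ?_, by abel⟩
      have hpu : p j (x - u) = p j x - u := by rw [map_sub, hpid j u huG]
      rw [hpu, map_sub, hAu, hu_def]
      module
    have hinfPQ : P ⊓ Q = ⊥ := by
      rw [LieSubmodule.eq_bot_iff]
      intro m hm
      rw [LieSubmodule.mem_inf] at hm
      exact posdefB m (horthPQ m hm.1 m hm.2)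
    have hPfac : IsComplexFactor J P := by
      refine ⟨⟨Q, fun x hx y hy => horthPQ x hx y hy, hsupPQ, hinfPQ⟩, ?_⟩
      intro x hx
      obtain ⟨hxG, hxA⟩ := (hPmem x).mp hx
      exact (hPmem _).mpr ⟨(hirr j).1.2 x hxG, by rw [hAJ x, hxA]⟩
    have hPle : P ≤ G j := by
      intro x hx
      exact ((hPmem x).mp hx).1
    rcases (hirr j).2.2 P hPle hPfac with hP | hP
    · right
      intro x hx
      have hmemP : (2⁻¹ : ℝ) • (x + A x) ∈ P := by
        refine (hPmem _).mpr ⟨SMulMemClass.smul_mem _ (add_mem hx (hAmem j x hx)), ?_⟩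
        rw [map_smul, map_add, hA2, add_comm]
      rw [hP] at hmemP
      have h0 : (2⁻¹ : ℝ) • (x + A x) = 0 := (LieSubmodule.mem_bot _).mp hmemP
      have h1 : x + A x = 0 := by
        rcases smul_eq_zero.mp h0 with h | h
        · norm_num at h
        · exact h
      have hAx : A x = -x := eq_neg_of_add_eq_zero_right h1
      have h2 : J (J' x) = x := by
        have h3 := hAx
        rw [hAapp] at h3
        exact neg_injective (by rw [h3])
      have h4 : J (J (J' x)) = J x := by rw [h2]
      rw [hJsq (J' x)] at h4
      rw [← h4, neg_neg]
    · left
      intro x hx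
      have hx' : x ∈ P := by rw [hP]; exact hx
      have hAx : A x = x := ((hPmem x).mp hx').2
      have h2 : J (J' x) = -x := by
        have h3 := hAx
        rw [hAapp] at h3
        exact neg_eq_iff_eq_neg.mp h3
      have h4 : J (J (J' x)) = J (-x) := by rw [h2]
      rw [hJsq (J' x), map_neg] at h4
      exact neg_injective h4
  -- extensionality on the decomposition
  have ext_on : ∀ f h : g →ₗ[ℝ] g, (∀ j, ∀ x ∈ G j, f x = h x) → f = h := by
    intro f h hfh
    ext x
    rw [← hcsum x, map_sum, map_sum]
    exact Finset.sum_congr rfl fun j _ => hfh j _ (hcmem x j)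
  -- the candidate structures
  let F : (Fin k → Bool) → (g →ₗ[ℝ] g) := fun b =>
    ∑ j, (if b j then (1 : ℝ) else -1) • (J ∘ₗ p j)
  have hFapp : ∀ b x, F b x = ∑ j, (if b j then (1 : ℝ) else -1) • J (p j x) := by
    intro b x
    simp only [F, LinearMap.sum_apply, LinearMap.smul_apply, LinearMap.comp_apply]
  have hFG : ∀ b (j : Fin k) (x : g), x ∈ G j → F b x = (if b j then (1 : ℝ) else -1) • J x := by
    intro b j x hx
    rw [hFapp]
    have h1 : ∀ i ∈ Finset.univ, i ≠ j → (if b i then (1 : ℝ) else -1) • J (p i x) = 0 := by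
      intro i _ hij
      rw [hpzero j i (fun h => hij h.symm) x hx, map_zero, smul_zero]
    rw [Finset.sum_eq_single j h1 (fun h => absurd (Finset.mem_univ j) h), hpid j x hx]
  have hee : ∀ (b : Fin k → Bool) (j : Fin k),
      (if b j then (1 : ℝ) else -1) * (if b j then (1 : ℝ) else -1) = 1 := by
    intro b j
    by_cases h : b j <;> simp [h]
  have hFmem : ∀ b, IsOrthBiinvCplxStruct (F b) := by
    intro b
    refine ⟨?_, ?_, ?_⟩
    · intro x
      conv_lhs => rw [← hcsum x]
      rw [map_sum, map_sum]
      have h1 : ∀ i ∈ Finset.univ, F b (F b (c x i)) = -(c x i) := by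
        intro i _
        rw [hFG b i _ (hcmem x i), map_smul,
          hFG b i _ ((hirr i).1.2 _ (hcmem x i)), smul_smul, hee, one_smul, hJsq]
      rw [Finset.sum_congr rfl h1, Finset.sum_neg_distrib, hcsum]
    · intro x y
      rw [hFapp, hFapp]
      have h1 : ∀ i ∈ Finset.univ, (if b i then (1 : ℝ) else -1) • J (p i ⁅x, y⁆)
          = ⁅(if b i then (1 : ℝ) else -1) • J (p i x), y⁆ := by
        intro i _
        rw [hpbr_l i x y, hJbr, smul_lie]
      rw [Finset.sum_congr rfl h1, ← sum_lie']
    · intro x y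
      show B (F b x) (F b y) = B x y
      have hBsum_l : ∀ (f : Fin k → g) (w : g), B (∑ i, f i) w = ∑ i, B (f i) w := by
        intro f w
        rw [map_sum, LinearMap.sum_apply]
      rw [hFapp, hFapp, hBsum_l]
      have h1 : ∀ i ∈ Finset.univ,
          (B ((if b i then (1 : ℝ) else -1) • J (p i x))) (∑ i', (if b i' then (1 : ℝ) else -1) • J (p i' y))
          = B (p i x) (p i y) := by
        intro i _
        rw [map_sum]
        have h2 : ∀ i' ∈ Finset.univ, i' ≠ i →
            (B ((if b i then (1 : ℝ) else -1) • J (p i x))) ((if b i' then (1 : ℝ) else -1) • J (p i' y)) = 0 := by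
          intro i' _ hii
          rw [map_smul, LinearMap.map_smul₂]
          have h0 : B (J (p i x)) (J (p i' y)) = 0 :=
            horthB i i' (fun h => hii h.symm) _ ((hirr i).1.2 _ (hpmem i x)) _ ((hirr i').1.2 _ (hpmem i' y))
          rw [h0, smul_zero, smul_zero]
        rw [Finset.sum_eq_single i h2 (fun h => absurd (Finset.mem_univ i) h),
          map_smul, LinearMap.map_smul₂, smul_smul, hee, one_smul, hJorthB]
      rw [Finset.sum_congr rfl h1]
      have h3 : ∀ i ∈ Finset.univ, B (p i x) (p i y) = B x (p i y) := by
        intro i _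
        rw [hpsym i x (p i y), hpid i (p i y) (hpmem i y)]
      rw [Finset.sum_congr rfl h3, ← map_sum, hpsum]
  have hFinj : Function.Injective F := by
    intro b b' hbb
    funext j
    by_contra hbj
    have hGne := (hirr j).2.1
    have hex : ∃ x ∈ G j, x ≠ 0 := by
      by_contra hno
      push_neg at hno
      exact hGne ((LieSubmodule.eq_bot_iff _).mpr hno)
    obtain ⟨x, hxG, hx0⟩ := hex
    have h1 : (if b j then (1 : ℝ) else -1) • J x = (if b' j then (1 : ℝ) else -1) • J x := by
      rw [← hFG b j x hxG, ← hFG b' j x hxG, hbb]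
    have hJx : J x ≠ 0 := by
      intro h
      apply hx0
      have := hJsq x
      rw [h, map_zero] at this
      exact (neg_eq_zero.mp this.symm)
    have h2 : J x + J x = 0 := by
      rcases Bool.eq_false_or_eq_true (b j) with hb | hb <;>
        rcases Bool.eq_false_or_eq_true (b' j) with hb' | hb'
      · exact absurd (hb.trans hb'.symm) hbj
      · rw [hb, hb'] at h1
        simp only [Bool.false_eq_true, if_false, if_true, one_smul, neg_smul] at h1
        nth_rewrite 2 [h1]
        exact add_neg_cancel _
      · rw [hb, hb'] at h1
        simp only [Bool.false_eq_true, if_false, if_true, one_smul, neg_smul] at h1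
        nth_rewrite 1 [← h1]
        exact neg_add_cancel _
      · exact absurd (hb.trans hb'.symm) hbj
    apply hJx
    have h3 : (2 : ℝ) • J x = 0 := by rw [two_smul]; exact h2
    rcases smul_eq_zero.mp h3 with h | h
    · norm_num at h
    · exact h
  have hSrange : {J' : g →ₗ[ℝ] g | IsOrthBiinvCplxStruct J'} = Set.range F := by
    ext J'
    constructor
    · intro hJ'
      refine ⟨fun j => if (∀ x ∈ G j, J' x = J x) then true else false, ?_⟩
      refine ext_on _ _ fun j x hx => ?_
      rw [hFG _ j x hx]
      by_cases h : ∀ x ∈ G j, J' x = J x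
      · simp only [if_pos h, if_true, one_smul]
        exact (h x hx).symm
      · have hm := (main J' hJ' j).resolve_left h
        simp only [if_neg h, Bool.false_eq_true, if_false]
        rw [neg_smul, one_smul, hm x hx]
    · rintro ⟨b, rfl⟩
      exact hFmem b
  constructor
  · intro J' hJ'
    refine ⟨fun j => if (∀ x ∈ G j, J' x = J x) then 1 else -1, ?_, ?_⟩
    · intro j
      by_cases h : ∀ x ∈ G j, J' x = J x
      · left
        show (if ∀ x ∈ G j, J' x = J x then (1 : ℝ) else -1) = 1
        rw [if_pos h]
      · right
        show (if ∀ x ∈ G j, J' x = J x then (1 : ℝ) else -1) = -1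
        rw [if_neg h]
    · intro j x hx
      show J' x = (if ∀ x ∈ G j, J' x = J x then (1 : ℝ) else -1) • J x
      by_cases h : ∀ x ∈ G j, J' x = J x
      · rw [if_pos h, one_smul]
        exact h x hx
      · rw [if_neg h, neg_smul, one_smul]
        exact ((main J' hJ' j).resolve_left h) x hx
  · rw [hSrange, ← Set.image_univ, Set.ncard_image_of_injective _ hFinj, Set.ncard_univ,
      Nat.card_eq_fintype_card]
    simp
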